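/- Let n ≥ 1, λ > 0 and ξ₀ ∈ Sⁿ \ {S}. Then for all ξ, η ∈ Σ_{λ,ξ₀} with ξ ≠ η one has J_{λ,ξ₀}(η)^{1/2}/|ξ − Φ_{λ,ξ₀}(η)|ⁿ − 1/|ξ − η|ⁿ < 0. -/

import Mathlib

open MeasureTheory Real Metric
open scoped RealInnerProductSpace ENNReal

noncomputable section

/-- The unit sphere `Sⁿ ⊂ ℝ^{n+1}`. -/
abbrev Sph (n : ℕ) := Metric.sphere (0 : EuclideanSpace ℝ (Fin (n + 1))) 1

/-- The surface measure on `Sⁿ`. -/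
def sphMeasure (n : ℕ) : Measure (Sph n) :=
  (volume : Measure (EuclideanSpace ℝ (Fin (n + 1)))).toSphere

/-- The constant `C_n = (4/n) π^{n/2} / Γ(n/2)`. -/
def Cconst (n : ℕ) : ℝ := (4 / n) * Real.pi ^ ((n : ℝ) / 2) / Real.Gamma ((n : ℝ) / 2)

/-- Finiteness of the double integral `∬ |v(ω)-v(η)|²/|ω-η|ⁿ`. -/
def energyFinite (n : ℕ) (v : Sph n → ℝ) : Prop :=
  ∫⁻ p : Sph n × Sph n, ENNReal.ofReal ((v p.1 - v p.2) ^ 2 / dist p.1 p.2 ^ n)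
      ∂((sphMeasure n).prod (sphMeasure n)) < ⊤

/-- The space `D`. -/
def memD (n : ℕ) (v : Sph n → ℝ) : Prop :=
  MemLp v 2 (sphMeasure n) ∧ energyFinite n v

/-- The quadratic form `E[u,v]`. -/
def energyForm (n : ℕ) (u v : Sph n → ℝ) : ℝ :=
  (1 / 2) * ∫ p : Sph n × Sph n,
      (u p.1 - u p.2) * (v p.1 - v p.2) / dist p.1 p.2 ^ n
    ∂((sphMeasure n).prod (sphMeasure n))

/-- `u` is a nonnegative weak solution of `H u = C_n u ln u`. -/
def isWeakSolution (n : ℕ) (u : Sph n → ℝ) : Prop :=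
  memD n u ∧ (∀ ω, 0 ≤ u ω) ∧
    ∀ φ : Sph n → ℝ, memD n φ →
      energyForm n φ u = Cconst n * ∫ ω, φ ω * (u ω * Real.log (u ω)) ∂(sphMeasure n)

/-- The south pole `S = -e_{n+1}`. -/
def southPole (n : ℕ) : Sph n :=
  ⟨EuclideanSpace.single (Fin.last n) (-1 : ℝ), by
    simp [mem_sphere_zero_iff_norm, EuclideanSpace.norm_single]⟩

open scoped Classical in
/-- Make a point of the sphere out of an ambient point (junk value otherwise). -/
def mkSph {n : ℕ} (x : EuclideanSpace ℝ (Fin (n + 1))) : Sph n :=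
  if h : x ∈ Metric.sphere (0 : EuclideanSpace ℝ (Fin (n + 1))) 1 then ⟨x, h⟩ else southPole n

/-- Inverse stereographic projection `𝒮 : ℝⁿ → Sⁿ`. -/
def invStereo {n : ℕ} (x : EuclideanSpace ℝ (Fin n)) : Sph n :=
  mkSph (WithLp.toLp 2 (Fin.snoc (fun i => 2 * x i / (1 + ‖x‖ ^ 2)) ((1 - ‖x‖ ^ 2) / (1 + ‖x‖ ^ 2)) :
    Fin (n + 1) → ℝ))

/-- Stereographic projection `𝒮⁻¹ : Sⁿ \ {S} → ℝⁿ` (junk value at `S`). -/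
def stereoProj {n : ℕ} (ξ : Sph n) : EuclideanSpace ℝ (Fin n) :=
  WithLp.toLp 2 (fun i => (ξ : EuclideanSpace ℝ (Fin (n + 1))) (Fin.castSucc i) /
    (1 + (ξ : EuclideanSpace ℝ (Fin (n + 1))) (Fin.last n)) : Fin n → ℝ)

/-- The Jacobian `(2/(1+|x|²))ⁿ` of the inverse stereographic projection. -/
def stereoJac (n : ℕ) (x : EuclideanSpace ℝ (Fin n)) : ℝ := (2 / (1 + ‖x‖ ^ 2)) ^ n

/-- Inversion `I_{λ,x₀}` in the sphere `∂B_λ(x₀) ⊂ ℝⁿ`. -/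
def sphereInversion {n : ℕ} (lam : ℝ) (x₀ x : EuclideanSpace ℝ (Fin n)) :
    EuclideanSpace ℝ (Fin n) :=
  (lam ^ 2 / ‖x - x₀‖ ^ 2) • (x - x₀) + x₀

/-- `|det D I_{λ,x₀}(x)| = (λ/|x-x₀|)^{2n}`. -/
def invJac (n : ℕ) (lam : ℝ) (x₀ x : EuclideanSpace ℝ (Fin n)) : ℝ :=
  (lam / ‖x - x₀‖) ^ (2 * n)

/-- The lifted inversion `Φ_{λ,ξ₀} = 𝒮 ∘ I_{λ,x₀} ∘ 𝒮⁻¹`. -/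
def PhiMap (n : ℕ) (lam : ℝ) (ξ₀ : Sph n) (η : Sph n) : Sph n :=
  invStereo (sphereInversion lam (stereoProj ξ₀) (stereoProj η))

/-- The Jacobian determinant `J_{λ,ξ₀}(η) = |det D Φ_{λ,ξ₀}(η)|`, computed through the
stereographic projection. -/
def jacPhi (n : ℕ) (lam : ℝ) (ξ₀ : Sph n) (η : Sph n) : ℝ :=
  stereoJac n (sphereInversion lam (stereoProj ξ₀) (stereoProj η)) *
    invJac n lam (stereoProj ξ₀) (stereoProj η) / stereoJac n (stereoProj η)

/-- `Σ_{λ,ξ₀} = 𝒮(B_λ(x₀)) ⊂ Sⁿ`. -/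
def SigmaSet (n : ℕ) (lam : ℝ) (ξ₀ : Sph n) : Set (Sph n) :=
  {η : Sph n | η ≠ southPole n ∧ ‖stereoProj η - stereoProj ξ₀‖ < lam}

/-- The pullback `u_{Φ_{λ,ξ₀}}(η) = J_{λ,ξ₀}(η)^{1/2} u(Φ_{λ,ξ₀}(η))`. -/
def pullPhi (n : ℕ) (lam : ℝ) (ξ₀ : Sph n) (u : Sph n → ℝ) (η : Sph n) : ℝ :=
  Real.sqrt (jacPhi n lam ξ₀ η) * u (PhiMap n lam ξ₀ η)

/-- `w` is antisymmetric with respect to `Φ_{λ,ξ₀}`. -/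
def antisymmetricPhi (n : ℕ) (lam : ℝ) (ξ₀ : Sph n) (w : Sph n → ℝ) : Prop :=
  ∀ᵐ η ∂(sphMeasure n), η ∈ SigmaSet n lam ξ₀ → w η = - pullPhi n lam ξ₀ w η

/-- Reflection `R_{α,e}` in the hyperplane `{x · e = α} ⊂ ℝⁿ`. -/
def reflMap {n : ℕ} (α : ℝ) (e x : EuclideanSpace ℝ (Fin n)) : EuclideanSpace ℝ (Fin n) :=
  x + (2 * (α - ⟪x, e⟫)) • e

/-- The lifted reflection `Ψ_{α,e} = 𝒮 ∘ R_{α,e} ∘ 𝒮⁻¹`. -/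
def PsiMap (n : ℕ) (α : ℝ) (e : EuclideanSpace ℝ (Fin n)) (η : Sph n) : Sph n :=
  invStereo (reflMap α e (stereoProj η))

/-- The Jacobian determinant `J_{α,e}(η) = |det D Ψ_{α,e}(η)|`. -/
def jacPsi (n : ℕ) (α : ℝ) (e : EuclideanSpace ℝ (Fin n)) (η : Sph n) : ℝ :=
  stereoJac n (reflMap α e (stereoProj η)) / stereoJac n (stereoProj η)

/-- `𝒮(H_{α,e}) ⊂ Sⁿ`. -/
def HSet (n : ℕ) (α : ℝ) (e : EuclideanSpace ℝ (Fin n)) : Set (Sph n) :=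
  {η : Sph n | η ≠ southPole n ∧ α < ⟪stereoProj η, e⟫}

/-- The pullback `u_{Ψ_{α,e}}(η) = J_{α,e}(η)^{1/2} u(Ψ_{α,e}(η))`. -/
def pullPsi (n : ℕ) (α : ℝ) (e : EuclideanSpace ℝ (Fin n)) (u : Sph n → ℝ) (η : Sph n) : ℝ :=
  Real.sqrt (jacPsi n α e η) * u (PsiMap n α e η)

/-- `w` is antisymmetric with respect to `Ψ_{α,e}`. -/
def antisymmetricPsi (n : ℕ) (α : ℝ) (e : EuclideanSpace ℝ (Fin n)) (w : Sph n → ℝ) : Prop :=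
  ∀ᵐ η ∂(sphMeasure n), η ∈ HSet n α e → w η = - pullPsi n α e w η


namespace KernelAux

lemma nsq {m : ℕ} (x : EuclideanSpace ℝ (Fin m)) : ‖x‖ ^ 2 = ∑ i, x i ^ 2 := by
  rw [EuclideanSpace.norm_eq, Real.sq_sqrt (by positivity)]
  simp [Real.norm_eq_abs, sq_abs]

lemma innr {m : ℕ} (x y : EuclideanSpace ℝ (Fin m)) : ⟪x, y⟫ = ∑ i, x i * y i := by
  simp [PiLp.inner_apply, RCLike.inner_apply, mul_comm]

lemma mkSph_coe {n : ℕ} (ξ : Sph n) : mkSph (ξ : EuclideanSpace ℝ (Fin (n+1))) = ξ := by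
  rw [mkSph, dif_pos ξ.2]

lemma norm_eq_one_of_sum {m : ℕ} (v : EuclideanSpace ℝ (Fin m)) (h : ∑ i, v i ^ 2 = 1) :
    ‖v‖ = 1 := by
  rw [EuclideanSpace.norm_eq]
  have h2 : ∑ i, ‖v i‖ ^ 2 = 1 := by simpa [Real.norm_eq_abs, sq_abs] using h
  rw [h2, Real.sqrt_one]

lemma snoc_mem_sphere {n : ℕ} (x : EuclideanSpace ℝ (Fin n)) :
    (WithLp.toLp 2 (Fin.snoc (fun i => 2 * x i / (1 + ‖x‖ ^ 2)) ((1 - ‖x‖ ^ 2) / (1 + ‖x‖ ^ 2)) :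
      Fin (n + 1) → ℝ) : EuclideanSpace ℝ (Fin (n+1))) ∈
      Metric.sphere (0 : EuclideanSpace ℝ (Fin (n + 1))) 1 := by
  have hP : (0:ℝ) < 1 + ‖x‖ ^ 2 := by positivity
  refine mem_sphere_zero_iff_norm.mpr (norm_eq_one_of_sum _ ?_)
  rw [Fin.sum_univ_castSucc]
  simp only [WithLp.ofLp_toLp, Fin.snoc_castSucc, Fin.snoc_last]
  have e1 : ∀ i ∈ Finset.univ, (2 * x i / (1 + ‖x‖ ^ 2)) ^ 2
      = (4 / (1 + ‖x‖ ^ 2) ^ 2) * x i ^ 2 := by intro i _; field_simp; ring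
  rw [Finset.sum_congr rfl e1, ← Finset.mul_sum, ← nsq]
  field_simp
  ring

lemma invStereo_coe {n : ℕ} (x : EuclideanSpace ℝ (Fin n)) :
    ((invStereo x : Sph n) : EuclideanSpace ℝ (Fin (n+1))) =
      (WithLp.toLp 2 (Fin.snoc (fun i => 2 * x i / (1 + ‖x‖ ^ 2)) ((1 - ‖x‖ ^ 2) / (1 + ‖x‖ ^ 2)) :
        Fin (n + 1) → ℝ) : EuclideanSpace ℝ (Fin (n+1))) := by
  rw [invStereo, mkSph, dif_pos (snoc_mem_sphere x)]

lemma dist_sq_invStereo {n : ℕ} (x y : EuclideanSpace ℝ (Fin n)) :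
    dist (invStereo x) (invStereo y) ^ 2
      = 4 * ‖x - y‖ ^ 2 / ((1 + ‖x‖ ^ 2) * (1 + ‖y‖ ^ 2)) := by
  have hPx : (0:ℝ) < 1 + ‖x‖ ^ 2 := by positivity
  have hPy : (0:ℝ) < 1 + ‖y‖ ^ 2 := by positivity
  rw [Subtype.dist_eq, dist_eq_norm, norm_sub_sq_real]
  have hux : ‖((invStereo x : Sph n) : EuclideanSpace ℝ (Fin (n+1)))‖ = 1 :=
    mem_sphere_zero_iff_norm.mp (invStereo x).2
  have huy : ‖((invStereo y : Sph n) : EuclideanSpace ℝ (Fin (n+1)))‖ = 1 :=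
    mem_sphere_zero_iff_norm.mp (invStereo y).2
  have hinner : ⟪((invStereo x : Sph n) : EuclideanSpace ℝ (Fin (n+1))),
      ((invStereo y : Sph n) : EuclideanSpace ℝ (Fin (n+1)))⟫
      = (4 * ⟪x, y⟫ + (1 - ‖x‖^2) * (1 - ‖y‖^2)) / ((1 + ‖x‖ ^ 2) * (1 + ‖y‖ ^ 2)) := by
    rw [invStereo_coe, invStereo_coe, innr, Fin.sum_univ_castSucc]
    simp only [WithLp.ofLp_toLp, Fin.snoc_castSucc, Fin.snoc_last]
    have e1 : ∀ i ∈ Finset.univ, (2 * x i / (1 + ‖x‖ ^ 2)) * (2 * y i / (1 + ‖y‖ ^ 2))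
        = (4 / ((1 + ‖x‖ ^ 2) * (1 + ‖y‖ ^ 2))) * (x i * y i) := by
      intro i _; field_simp; ring
    rw [Finset.sum_congr rfl e1, ← Finset.mul_sum, ← innr]
    field_simp
    try ring
  rw [hux, huy, hinner]
  have hxy : ‖x - y‖ ^ 2 = ‖x‖^2 - 2*⟪x,y⟫ + ‖y‖^2 := norm_sub_sq_real x y
  rw [hxy]
  field_simp
  ring

lemma sum_castSucc_sq {n : ℕ} (ξ : Sph n) :
    ∑ j, (ξ : EuclideanSpace ℝ (Fin (n+1))) (Fin.castSucc j) ^ 2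
      = 1 - (ξ : EuclideanSpace ℝ (Fin (n+1))) (Fin.last n) ^ 2 := by
  have h : ‖(ξ : EuclideanSpace ℝ (Fin (n+1)))‖ = 1 := mem_sphere_zero_iff_norm.mp ξ.2
  have h2 := nsq (ξ : EuclideanSpace ℝ (Fin (n+1)))
  rw [h, Fin.sum_univ_castSucc] at h2
  linarith [h2]

lemma last_ne_neg_one {n : ℕ} (ξ : Sph n) (h : ξ ≠ southPole n) :
    (ξ : EuclideanSpace ℝ (Fin (n+1))) (Fin.last n) ≠ -1 := by
  intro ht
  apply h
  have hsum := sum_castSucc_sq ξ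
  rw [ht] at hsum
  norm_num at hsum
  have hz : ∀ j : Fin n, (ξ : EuclideanSpace ℝ (Fin (n+1))) (Fin.castSucc j) = 0 := by
    intro j
    have := Finset.sum_eq_zero_iff_of_nonneg
      (fun i (_ : i ∈ Finset.univ) => sq_nonneg
        ((ξ : EuclideanSpace ℝ (Fin (n+1))) (Fin.castSucc i))) |>.mp hsum j (Finset.mem_univ j)
    exact pow_eq_zero_iff (two_ne_zero) |>.mp this
  apply Subtype.ext
  ext i
  induction i using Fin.lastCases with
  | last =>
      rw [ht]
      simp [southPole, EuclideanSpace.single_apply]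
  | cast j =>
      rw [hz j]
      simp [southPole, EuclideanSpace.single_apply, (Fin.castSucc_lt_last j).ne]

lemma norm_stereoProj_sq {n : ℕ} (ξ : Sph n) (h : ξ ≠ southPole n) :
    ‖stereoProj ξ‖ ^ 2 = (1 - (ξ : EuclideanSpace ℝ (Fin (n+1))) (Fin.last n)) /
      (1 + (ξ : EuclideanSpace ℝ (Fin (n+1))) (Fin.last n)) := by
  set t := (ξ : EuclideanSpace ℝ (Fin (n+1))) (Fin.last n) with ht
  have h1 : (1:ℝ) + t ≠ 0 := by
    intro hc; exact last_ne_neg_one ξ h (by linarith)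
  rw [nsq]
  have e1 : ∀ j ∈ Finset.univ, (stereoProj ξ) j ^ 2
      = (1/(1+t)^2) * ((ξ : EuclideanSpace ℝ (Fin (n+1))) (Fin.castSucc j)) ^ 2 := by
    intro j _
    show ((ξ : EuclideanSpace ℝ (Fin (n+1))) (Fin.castSucc j) / (1 + t)) ^ 2 = _
    field_simp
  rw [Finset.sum_congr rfl e1, ← Finset.mul_sum, sum_castSucc_sq]
  field_simp
  ring

lemma invStereo_stereoProj {n : ℕ} (ξ : Sph n) (h : ξ ≠ southPole n) :
    invStereo (stereoProj ξ) = ξ := by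
  set t := (ξ : EuclideanSpace ℝ (Fin (n+1))) (Fin.last n) with ht
  have h1 : (1:ℝ) + t ≠ 0 := by
    intro hc; exact last_ne_neg_one ξ h (by linarith)
  have hnorm := norm_stereoProj_sq ξ h
  rw [invStereo]
  have hfun : (Fin.snoc (fun i => 2 * (stereoProj ξ) i / (1 + ‖stereoProj ξ‖ ^ 2))
      ((1 - ‖stereoProj ξ‖ ^ 2) / (1 + ‖stereoProj ξ‖ ^ 2)) : Fin (n+1) → ℝ)
      = (ξ : EuclideanSpace ℝ (Fin (n+1))).ofLp := by
    funext i
    induction i using Fin.lastCases with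
    | last =>
        rw [Fin.snoc_last, hnorm, ← ht]
        field_simp
        ring
    | cast j =>
        rw [Fin.snoc_castSucc, hnorm, ← ht]
        show 2 * ((ξ : EuclideanSpace ℝ (Fin (n+1))) (Fin.castSucc j) / (1 + t)) / _ = _
        field_simp
        ring
  rw [hfun, WithLp.toLp_ofLp]
  exact mkSph_coe ξ

lemma core_ineq {n : ℕ} (lam : ℝ) (hlam : 0 < lam) (x₀ a b : EuclideanSpace ℝ (Fin n))
    (ha : ‖a - x₀‖ < lam) (hb : ‖b - x₀‖ < lam) (hbx : b ≠ x₀) :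
    lam ^ 2 * ‖a - b‖ ^ 2
      < ‖b - x₀‖ ^ 2 * ‖a - ((lam ^ 2 / ‖b - x₀‖ ^ 2) • (b - x₀) + x₀)‖ ^ 2 := by
  set u := a - x₀ with hu
  set v := b - x₀ with hv
  have hr : (0:ℝ) < ‖v‖ := norm_pos_iff.mpr (sub_ne_zero.mpr hbx)
  have hr2 : ‖v‖ ^ 2 ≠ 0 := by positivity
  have key : a - ((lam ^ 2 / ‖v‖ ^ 2) • v + x₀) = u - (lam ^ 2 / ‖v‖ ^ 2) • v := by
    rw [hu]; abel
  rw [key]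
  have e1 : ‖u - (lam ^ 2 / ‖v‖ ^ 2) • v‖ ^ 2
      = ‖u‖ ^ 2 - 2 * (lam ^ 2 / ‖v‖ ^ 2) * ⟪u, v⟫ + (lam ^ 2 / ‖v‖ ^ 2) ^ 2 * ‖v‖ ^ 2 := by
    rw [norm_sub_sq_real, real_inner_smul_right, norm_smul, Real.norm_eq_abs, mul_pow, sq_abs]
    ring
  have e2 : ‖v‖ ^ 2 * ‖u - (lam ^ 2 / ‖v‖ ^ 2) • v‖ ^ 2
      = ‖v‖ ^ 2 * ‖u‖ ^ 2 - 2 * lam ^ 2 * ⟪u, v⟫ + lam ^ 4 := by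
    rw [e1]; field_simp
  have e3 : ‖u - v‖ ^ 2 = ‖u‖ ^ 2 - 2 * ⟪u, v⟫ + ‖v‖ ^ 2 := norm_sub_sq_real u v
  have hab : a - b = u - v := by rw [hu, hv]; abel
  rw [hab, e2, e3]
  have h1 : ‖u‖ ^ 2 < lam ^ 2 := by nlinarith [norm_nonneg u]
  have h2 : ‖v‖ ^ 2 < lam ^ 2 := by nlinarith [norm_nonneg v]
  nlinarith [mul_pos (sub_pos.2 h1) (sub_pos.2 h2)]

end KernelAux

/-- the kernel inequality for the lifted inversion. -/
theorem kernel_difference_neg_inversion (n : ℕ) (hn : 1 ≤ n) (lam : ℝ) (hlam : 0 < lam) (ξ₀ : Sph n)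
    (hξ₀ : ξ₀ ≠ southPole n) :
    ∀ ξ ∈ SigmaSet n lam ξ₀, ∀ η ∈ SigmaSet n lam ξ₀, ξ ≠ η →
      Real.sqrt (jacPhi n lam ξ₀ η) / dist ξ (PhiMap n lam ξ₀ η) ^ n -
          1 / dist ξ η ^ n < 0 := by
  intro ξ hξ η hη hne
  obtain ⟨hξS, hξd⟩ := hξ
  obtain ⟨hηS, hηd⟩ := hη
  have hξa : invStereo (stereoProj ξ) = ξ := KernelAux.invStereo_stereoProj ξ hξS
  have hηb : invStereo (stereoProj η) = η := KernelAux.invStereo_stereoProj η hηS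
  set x₀ := stereoProj ξ₀ with hx0
  set a := stereoProj ξ with hadef
  set b := stereoProj η with hbdef
  have hD1 : 0 < dist ξ η := dist_pos.mpr hne
  have hab : a ≠ b := by
    intro hcc; exact hne (by rw [← hξa, ← hηb, hcc])
  by_cases hb0 : b = x₀
  · have hJ : jacPhi n lam ξ₀ η = 0 := by
      simp only [jacPhi, invJac, ← hx0, ← hbdef]
      rw [hb0, sub_self, norm_zero, div_zero, zero_pow (by omega : 2 * n ≠ 0), mul_zero,
        zero_div]
    rw [hJ, Real.sqrt_zero, zero_div]
    have hpos : 0 < 1 / dist ξ η ^ n := by positivity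
    linarith
  · set c := sphereInversion lam x₀ b with hcdef
    have hr : 0 < ‖b - x₀‖ := norm_pos_iff.mpr (sub_ne_zero.mpr hb0)
    have hcore : lam ^ 2 * ‖a - b‖ ^ 2 < ‖b - x₀‖ ^ 2 * ‖a - c‖ ^ 2 := by
      rw [hcdef, sphereInversion]
      exact KernelAux.core_ineq lam hlam x₀ a b hξd hηd hb0
    have habn : 0 < ‖a - b‖ := norm_pos_iff.mpr (sub_ne_zero.mpr hab)
    have h0 : 0 < ‖b - x₀‖ ^ 2 * ‖a - c‖ ^ 2 := lt_of_le_of_lt (by positivity) hcore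
    have hacn : 0 < ‖a - c‖ := by
      rcases (norm_nonneg (a - c)).lt_or_eq with h | h
      · exact h
      · rw [← h] at h0; simp at h0
    have hPa : (0:ℝ) < 1 + ‖a‖ ^ 2 := by positivity
    have hPb : (0:ℝ) < 1 + ‖b‖ ^ 2 := by positivity
    have hPc : (0:ℝ) < 1 + ‖c‖ ^ 2 := by positivity
    have hD1sq : dist ξ η ^ 2 = 4 * ‖a - b‖ ^ 2 / ((1 + ‖a‖ ^ 2) * (1 + ‖b‖ ^ 2)) := by
      rw [← hξa, ← hηb]; exact KernelAux.dist_sq_invStereo a b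
    have hPhi : PhiMap n lam ξ₀ η = invStereo c := rfl
    have hD2sq : dist ξ (PhiMap n lam ξ₀ η) ^ 2
        = 4 * ‖a - c‖ ^ 2 / ((1 + ‖a‖ ^ 2) * (1 + ‖c‖ ^ 2)) := by
      rw [hPhi, ← hξa]; exact KernelAux.dist_sq_invStereo a c
    have hD2 : 0 < dist ξ (PhiMap n lam ξ₀ η) := by
      rcases (dist_nonneg (x := ξ) (y := PhiMap n lam ξ₀ η)).lt_or_eq with h | h
      · exact h
      · exfalso
        have h2 : (0:ℝ) < dist ξ (PhiMap n lam ξ₀ η) ^ 2 := by rw [hD2sq]; positivity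
        rw [← h] at h2
        simp at h2
    set K := 2 / (1 + ‖c‖ ^ 2) * (lam / ‖b - x₀‖) ^ 2 / (2 / (1 + ‖b‖ ^ 2)) with hKdef
    have hK0 : 0 ≤ K := by rw [hKdef]; positivity
    have hJ : jacPhi n lam ξ₀ η = K ^ n := by
      simp only [jacPhi, stereoJac, invJac, ← hx0, ← hbdef, ← hcdef, hKdef]
      rw [pow_mul, ← mul_pow, ← div_pow]
    have hX2 : (Real.sqrt (jacPhi n lam ξ₀ η) / dist ξ (PhiMap n lam ξ₀ η) ^ n) ^ 2
        = (K / dist ξ (PhiMap n lam ξ₀ η) ^ 2) ^ n := by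
      rw [div_pow, Real.sq_sqrt (by rw [hJ]; positivity), hJ, pow_right_comm, ← div_pow]
    have hY2 : (1 / dist ξ η ^ n) ^ 2 = (1 / dist ξ η ^ 2) ^ n := by
      rw [div_pow, one_pow, pow_right_comm, div_pow, one_pow]
    have hbase : K / dist ξ (PhiMap n lam ξ₀ η) ^ 2 < 1 / dist ξ η ^ 2 := by
      rw [hD1sq, hD2sq, hKdef]
      have e2 : 2 / (1 + ‖c‖ ^ 2) * (lam / ‖b - x₀‖) ^ 2 / (2 / (1 + ‖b‖ ^ 2)) /
          (4 * ‖a - c‖ ^ 2 / ((1 + ‖a‖ ^ 2) * (1 + ‖c‖ ^ 2)))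
          = (lam ^ 2 * ‖a - b‖ ^ 2) *
            ((1 + ‖a‖ ^ 2) * (1 + ‖b‖ ^ 2) /
              (4 * ‖b - x₀‖ ^ 2 * ‖a - c‖ ^ 2 * ‖a - b‖ ^ 2)) := by
        field_simp
      have e3 : 1 / (4 * ‖a - b‖ ^ 2 / ((1 + ‖a‖ ^ 2) * (1 + ‖b‖ ^ 2)))
          = (‖b - x₀‖ ^ 2 * ‖a - c‖ ^ 2) *
            ((1 + ‖a‖ ^ 2) * (1 + ‖b‖ ^ 2) /
              (4 * ‖b - x₀‖ ^ 2 * ‖a - c‖ ^ 2 * ‖a - b‖ ^ 2)) := by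
        field_simp
      rw [e2, e3]
      exact mul_lt_mul_of_pos_right hcore (by positivity)
    have hY : 0 < 1 / dist ξ η ^ n := by positivity
    have hfin : Real.sqrt (jacPhi n lam ξ₀ η) / dist ξ (PhiMap n lam ξ₀ η) ^ n
        < 1 / dist ξ η ^ n := by
      refine lt_of_pow_lt_pow_left₀ 2 hY.le ?_
      rw [hX2, hY2]
      exact pow_lt_pow_left₀ hbase (div_nonneg hK0 (sq_nonneg _)) (by omega)
    linarith


end
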